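/- In the ratio-form setup, suppose $|\alpha_{(0)}(u) - \mu_{\gamma,-}| \leq M$ and $|\tau(u)| \leq M'$ for all $u$, $\mathbb{E}[h_+(U)] > 0$, and let $\bar{w} = \kappa w$ for some $\kappa > 0$ where $w \geq 0$ with $\int w\, dG = 1$, $\mathbb{E}[\bar w(U)] > 0$, and $\tau_w = \int w(u)\tau(u)\, dG(u)$. Then $|\tau_\gamma - \tau_w| \leq M \frac{\mathbb{E}[|h_+(U) - h_-(U)|]}{\mathbb{E}[h_+(U)]} + M' \frac{\mathbb{E}[|h_+(U) - \bar{w}(U)|] + |\mathbb{E}[h_+(U) - \bar{w}(U)]|}{\mathbb{E}[h_+(U)]}$. -/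

import Mathlib

open MeasureTheory

set_option maxHeartbeats 1000000 in
/-- Bias bound for the ratio-form estimator targeting a weighted treatment
effect `τ_w`, when the target weight function is known only up to a
multiplicative constant `κ`:
`|τ_γ - τ_w| ≤ M E[|h₊-h₋|]/E[h₊] + M' (E[|h₊-w̄|] + |E[h₊-w̄]|)/E[h₊]`. -/
theorem stmt15
    {Ω : Type*} [MeasurableSpace Ω] (P : Measure Ω) [IsProbabilityMeasure P]
    (U Z Y0 Y1 : Ω → ℝ)
    (hUm : Measurable U) (hZm : Measurable Z)
    (hY0m : Measurable Y0) (hY1m : Measurable Y1)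
    (CY : ℝ) (hY0b : ∀ ω, |Y0 ω| ≤ CY) (hY1b : ∀ ω, |Y1 ω| ≤ CY)
    (G : Measure ℝ) [IsProbabilityMeasure G]
    (lam : Measure ℝ) [SigmaFinite lam]
    (p : ℝ → ℝ → ℝ) (hpm : Measurable (Function.uncurry p)) (hpnn : ∀ z u, 0 ≤ p z u)
    (α0 α1 τ : ℝ → ℝ) (hα0m : Measurable α0) (hα1m : Measurable α1)
    (hτdef : ∀ u, τ u = α1 u - α0 u)
    (hJoint0 : ∀ g φf : ℝ → ℝ, Measurable g → Measurable φf →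
      (∃ Cg, ∀ z, |g z| ≤ Cg) → (∃ Cf, ∀ u, |φf u| ≤ Cf) →
      ∫ ω, Y0 ω * g (Z ω) * φf (U ω) ∂P
        = ∫ u, α0 u * (∫ z, g z * p z u ∂lam) * φf u ∂G)
    (hJoint1 : ∀ g φf : ℝ → ℝ, Measurable g → Measurable φf →
      (∃ Cg, ∀ z, |g z| ≤ Cg) → (∃ Cf, ∀ u, |φf u| ≤ Cf) →
      ∫ ω, Y1 ω * g (Z ω) * φf (U ω) ∂P
        = ∫ u, α1 u * (∫ z, g z * p z u ∂lam) * φf u ∂G)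
    (hDens : ∀ g : ℝ → ℝ, Measurable g → (∃ Cg, ∀ z, |g z| ≤ Cg) →
      ∫ ω, g (Z ω) ∂P = ∫ u, (∫ z, g z * p z u ∂lam) ∂G)
    (c : ℝ) (γp γm : ℝ → ℝ) (hγpm : Measurable γp) (hγmm : Measurable γm)
    (hγpnn : ∀ z, 0 ≤ γp z) (hγmnn : ∀ z, 0 ≤ γm z)
    (Cγ : ℝ) (hγpb : ∀ z, |γp z| ≤ Cγ) (hγmb : ∀ z, |γm z| ≤ Cγ)
    (hplus hminus : ℝ → ℝ)
    (hhp : ∀ u, hplus u = ∫ z in Set.Ici c, γp z * p z u ∂lam)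
    (hhm : ∀ u, hminus u = ∫ z in Set.Iio c, γm z * p z u ∂lam)
    (hhppos : 0 < ∫ u, hplus u ∂G) (hhmpos : 0 < ∫ u, hminus u ∂G)
    -- the ratio-form estimand:
    (μγm τγ : ℝ)
    (hμγm : μγm = (∫ ω, (if Z ω < c then γm (Z ω) * (if c ≤ Z ω then Y1 ω else Y0 ω) else 0) ∂P)
        / (∫ ω, (if Z ω < c then γm (Z ω) else 0) ∂P))
    (hτγ : τγ = (∫ ω, (if c ≤ Z ω then γp (Z ω) * (if c ≤ Z ω then Y1 ω else Y0 ω) else 0) ∂P)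
        / (∫ ω, (if c ≤ Z ω then γp (Z ω) else 0) ∂P) - μγm)
    -- uniform bounds:
    (M M' : ℝ) (hMa : ∀ u, |α0 u - μγm| ≤ M) (hM'τ : ∀ u, |τ u| ≤ M')
    -- target weight function, known up to the multiplicative constant κ:
    (w wbar : ℝ → ℝ) (hwm : Measurable w) (hwnn : ∀ u, 0 ≤ w u)
    (hwint : ∫ u, w u ∂G = 1)
    (κ : ℝ) (hκ : 0 < κ) (hwbar : ∀ u, wbar u = κ * w u)
    (hwbarpos : 0 < ∫ u, wbar u ∂G)
    (τw : ℝ) (hτw : τw = ∫ u, w u * τ u ∂G) :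
    |τγ - τw| ≤ M * (∫ u, |hplus u - hminus u| ∂G) / (∫ u, hplus u ∂G)
      + M' * ((∫ u, |hplus u - wbar u| ∂G) + |∫ u, hplus u - wbar u ∂G|)
          / (∫ u, hplus u ∂G) := by
  -- notation
  set E := ∫ u, hplus u ∂G with hE
  set F := ∫ u, hminus u ∂G with hF
  have hEne : E ≠ 0 := ne_of_gt hhppos
  have hFne : F ≠ 0 := ne_of_gt hhmpos
  -- integrability of hplus, hminus, w, wbar
  have hIp : Integrable hplus G := by
    by_contra h
    rw [hE, integral_undef h] at hhppos; exact lt_irrefl 0 hhppos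
  have hIm : Integrable hminus G := by
    by_contra h
    rw [hF, integral_undef h] at hhmpos; exact lt_irrefl 0 hhmpos
  have hIw : Integrable w G := by
    by_contra h
    rw [integral_undef h] at hwint; exact one_ne_zero hwint.symm
  have hwbarfun : wbar = fun u => κ * w u := funext hwbar
  have hIwb : Integrable wbar G := by rw [hwbarfun]; exact hIw.const_mul κ
  have hwbm : Measurable wbar := by rw [hwbarfun]; exact (hwm.const_mul κ)
  have hwbarint : ∫ u, wbar u ∂G = κ := by
    rw [hwbarfun, integral_const_mul, hwint, mul_one]
  -- measurability / boundedness of α's and τ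
  have hτm : Measurable τ := by
    have : τ = fun u => α1 u - α0 u := funext hτdef
    rw [this]; exact hα1m.sub hα0m
  have hM'0 : 0 ≤ M' := le_trans (abs_nonneg _) (hM'τ 0)
  have hM0 : 0 ≤ M := le_trans (abs_nonneg _) (hMa 0)
  have hα0b : ∀ u, |α0 u| ≤ M + |μγm| := by
    intro u
    calc |α0 u| = |(α0 u - μγm) + μγm| := by ring_nf
    _ ≤ |α0 u - μγm| + |μγm| := abs_add_le _ _
    _ ≤ M + |μγm| := add_le_add (hMa u) le_rfl
  have hα1b : ∀ u, |α1 u| ≤ M' + (M + |μγm|) := by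
    intro u
    have h1 : α1 u = τ u + α0 u := by rw [hτdef u]; ring
    calc |α1 u| = |τ u + α0 u| := by rw [h1]
    _ ≤ |τ u| + |α0 u| := abs_add_le _ _
    _ ≤ M' + (M + |μγm|) := add_le_add (hM'τ u) (hα0b u)
  -- the indicator-type weight functions on Z
  set gp : ℝ → ℝ := fun z => if c ≤ z then γp z else 0 with hgp
  set gm : ℝ → ℝ := fun z => if z < c then γm z else 0 with hgm
  have hgpm : Measurable gp := Measurable.ite measurableSet_Ici hγpm measurable_const
  have hgmm : Measurable gm := Measurable.ite measurableSet_Iio hγmm measurable_const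
  have hCγ0 : 0 ≤ Cγ := le_trans (abs_nonneg _) (hγpb 0)
  have hgpb : ∀ z, |gp z| ≤ Cγ := by
    intro z; by_cases h : c ≤ z <;> simp [hgp, h, hγpb, abs_nonneg, hCγ0]
  have hgmb : ∀ z, |gm z| ≤ Cγ := by
    intro z; by_cases h : z < c <;> simp [hgm, h, hγmb, abs_nonneg, hCγ0]
  -- inner integral identities
  have hinnerp : ∀ u, (∫ z, gp z * p z u ∂lam) = hplus u := by
    intro u
    rw [hhp u, ← integral_indicator measurableSet_Ici]
    congr 1; funext z
    by_cases h : c ≤ z <;> simp [hgp, Set.indicator, h]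
  have hinnerm : ∀ u, (∫ z, gm z * p z u ∂lam) = hminus u := by
    intro u
    rw [hhm u, ← integral_indicator measurableSet_Iio]
    congr 1; funext z
    by_cases h : z < c <;> simp [hgm, Set.indicator, h]
  -- compute numerators and denominators
  have hone : Measurable (fun _ : ℝ => (1:ℝ)) := measurable_const
  have honeb : ∃ Cf, ∀ u : ℝ, |(1:ℝ)| ≤ Cf := ⟨1, fun u => by simp⟩
  have hAnum : (∫ ω, (if c ≤ Z ω then γp (Z ω) * (if c ≤ Z ω then Y1 ω else Y0 ω) else 0) ∂P)
      = ∫ u, α1 u * hplus u ∂G := by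
    have heq : ∀ ω, (if c ≤ Z ω then γp (Z ω) * (if c ≤ Z ω then Y1 ω else Y0 ω) else 0)
        = Y1 ω * gp (Z ω) * (fun _ : ℝ => (1:ℝ)) (U ω) := by
      intro ω; by_cases h : c ≤ Z ω <;> simp [hgp, h] <;> ring
    rw [integral_congr_ae (Filter.Eventually.of_forall heq),
      hJoint1 gp (fun _ => 1) hgpm hone ⟨Cγ, hgpb⟩ honeb]
    congr 1; funext u; rw [hinnerp u]; ring
  have hAden : (∫ ω, (if c ≤ Z ω then γp (Z ω) else 0) ∂P) = E := by
    have heq : ∀ ω, (if c ≤ Z ω then γp (Z ω) else 0) = gp (Z ω) := by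
      intro ω; by_cases h : c ≤ Z ω <;> simp [hgp, h]
    rw [integral_congr_ae (Filter.Eventually.of_forall heq),
      hDens gp hgpm ⟨Cγ, hgpb⟩, hE]
    congr 1; funext u; rw [hinnerp u]
  have hBnum : (∫ ω, (if Z ω < c then γm (Z ω) * (if c ≤ Z ω then Y1 ω else Y0 ω) else 0) ∂P)
      = ∫ u, α0 u * hminus u ∂G := by
    have heq : ∀ ω, (if Z ω < c then γm (Z ω) * (if c ≤ Z ω then Y1 ω else Y0 ω) else 0)
        = Y0 ω * gm (Z ω) * (fun _ : ℝ => (1:ℝ)) (U ω) := by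
      intro ω
      by_cases h : Z ω < c
      · have h' : ¬ c ≤ Z ω := not_le.mpr h
        simp [hgm, h, h']; ring
      · simp [hgm, h]
    rw [integral_congr_ae (Filter.Eventually.of_forall heq),
      hJoint0 gm (fun _ => 1) hgmm hone ⟨Cγ, hgmb⟩ honeb]
    congr 1; funext u; rw [hinnerm u]; ring
  have hBden : (∫ ω, (if Z ω < c then γm (Z ω) else 0) ∂P) = F := by
    have heq : ∀ ω, (if Z ω < c then γm (Z ω) else 0) = gm (Z ω) := by
      intro ω; by_cases h : Z ω < c <;> simp [hgm, h]
    rw [integral_congr_ae (Filter.Eventually.of_forall heq),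
      hDens gm hgmm ⟨Cγ, hgmb⟩, hF]
    congr 1; funext u; rw [hinnerm u]
  -- so
  have hμ : μγm = (∫ u, α0 u * hminus u ∂G) / F := by rw [hμγm, hBnum, hBden]
  have hτγ' : τγ = (∫ u, α1 u * hplus u ∂G) / E - μγm := by rw [hτγ, hAnum, hAden]
  -- integrability of products
  have hIa0p : Integrable (fun u => α0 u * hplus u) G :=
    hIp.bdd_mul hα0m.aestronglyMeasurable (Filter.Eventually.of_forall fun u => hα0b u)
  have hIa0m : Integrable (fun u => α0 u * hminus u) G :=
    hIm.bdd_mul hα0m.aestronglyMeasurable (Filter.Eventually.of_forall fun u => hα0b u)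
  have hIτp : Integrable (fun u => τ u * hplus u) G :=
    hIp.bdd_mul hτm.aestronglyMeasurable (Filter.Eventually.of_forall fun u => hM'τ u)
  have hIτwb : Integrable (fun u => τ u * wbar u) G :=
    hIwb.bdd_mul hτm.aestronglyMeasurable (Filter.Eventually.of_forall fun u => hM'τ u)
  have hIτw : Integrable (fun u => τ u * w u) G :=
    hIw.bdd_mul hτm.aestronglyMeasurable (Filter.Eventually.of_forall fun u => hM'τ u)
  have hIdp : Integrable (fun u => (α0 u - μγm) * hplus u) G :=
    hIp.bdd_mul (hα0m.sub measurable_const).aestronglyMeasurable (Filter.Eventually.of_forall fun u => hMa u)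
  have hIdm : Integrable (fun u => (α0 u - μγm) * hminus u) G :=
    hIm.bdd_mul (hα0m.sub measurable_const).aestronglyMeasurable (Filter.Eventually.of_forall fun u => hMa u)
  -- key scalar quantities
  set A0p := ∫ u, α0 u * hplus u ∂G with hA0p
  set A0m := ∫ u, α0 u * hminus u ∂G with hA0m
  set Tp := ∫ u, τ u * hplus u ∂G with hTp
  set S := ∫ u, w u * τ u ∂G with hS
  set T1 := ∫ u, (α0 u - μγm) * (hplus u - hminus u) ∂G with hT1
  set T2 := ∫ u, τ u * (hplus u - wbar u) ∂G with hT2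
  set D := ∫ u, hplus u - wbar u ∂G with hD
  -- linearity facts
  have fact1 : ∫ u, α1 u * hplus u ∂G = A0p + Tp := by
    rw [hA0p, hTp, ← integral_add hIa0p hIτp]
    congr 1; funext u; rw [hτdef u]; ring
  have fact2 : ∫ u, (α0 u - μγm) * hplus u ∂G = A0p - μγm * E := by
    have : (fun u => (α0 u - μγm) * hplus u)
        = fun u => α0 u * hplus u - μγm * hplus u := by funext u; ring
    rw [this, integral_sub hIa0p (hIp.const_mul μγm), integral_const_mul, hA0p, hE]
  have fact3 : ∫ u, (α0 u - μγm) * hminus u ∂G = 0 := by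
    have : (fun u => (α0 u - μγm) * hminus u)
        = fun u => α0 u * hminus u - μγm * hminus u := by funext u; ring
    rw [this, integral_sub hIa0m (hIm.const_mul μγm), integral_const_mul, ← hA0m, ← hF,
      hμ, div_mul_cancel₀ _ hFne, sub_self]
  have fact4 : T1 = A0p - μγm * E := by
    have : (fun u => (α0 u - μγm) * (hplus u - hminus u))
        = fun u => (α0 u - μγm) * hplus u - (α0 u - μγm) * hminus u := by funext u; ring
    rw [hT1, this, integral_sub hIdp hIdm, fact2, fact3, sub_zero]
  have fact5 : T2 = Tp - κ * S := by
    have h1 : (fun u => τ u * (hplus u - wbar u))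
        = fun u => τ u * hplus u - τ u * wbar u := by funext u; ring
    have h2 : (fun u => τ u * wbar u) = fun u => κ * (w u * τ u) := by
      funext u; rw [hwbar u]; ring
    rw [hT2, h1, integral_sub hIτp hIτwb, h2, integral_const_mul, hTp, hS]
  have fact6 : D = E - κ := by
    rw [hD, integral_sub hIp hIwb, hwbarint, hE]
  -- the decomposition identity
  have hdecomp : τγ - τw = (T1 + T2 - D * S) / E := by
    rw [hτγ', hτw, fact1, fact4, fact5, fact6]
    field_simp
    ring
  -- bounds on T1, T2, S
  have habs : ∀ f : ℝ → ℝ, |∫ u, f u ∂G| ≤ ∫ u, |f u| ∂G := by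
    intro f
    simpa [Real.norm_eq_abs] using norm_integral_le_integral_norm (μ := G) f
  have hbT1 : |T1| ≤ M * ∫ u, |hplus u - hminus u| ∂G := by
    calc |T1| ≤ ∫ u, |(α0 u - μγm) * (hplus u - hminus u)| ∂G := habs _
    _ ≤ ∫ u, M * |hplus u - hminus u| ∂G := by
        apply integral_mono_of_nonneg (Filter.Eventually.of_forall fun u => abs_nonneg _)
          ((hIp.sub hIm).abs.const_mul M)
        apply Filter.Eventually.of_forall
        intro u
        show |(α0 u - μγm) * (hplus u - hminus u)| ≤ M * |hplus u - hminus u|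
        rw [abs_mul]
        exact mul_le_mul_of_nonneg_right (hMa u) (abs_nonneg _)
    _ = M * ∫ u, |hplus u - hminus u| ∂G := integral_const_mul M _
  have hbT2 : |T2| ≤ M' * ∫ u, |hplus u - wbar u| ∂G := by
    calc |T2| ≤ ∫ u, |τ u * (hplus u - wbar u)| ∂G := habs _
    _ ≤ ∫ u, M' * |hplus u - wbar u| ∂G := by
        apply integral_mono_of_nonneg (Filter.Eventually.of_forall fun u => abs_nonneg _)
          ((hIp.sub hIwb).abs.const_mul M')
        apply Filter.Eventually.of_forall
        intro u
        show |τ u * (hplus u - wbar u)| ≤ M' * |hplus u - wbar u|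
        rw [abs_mul]
        exact mul_le_mul_of_nonneg_right (hM'τ u) (abs_nonneg _)
    _ = M' * ∫ u, |hplus u - wbar u| ∂G := integral_const_mul M' _
  have hbS : |S| ≤ M' := by
    calc |S| ≤ ∫ u, |w u * τ u| ∂G := habs _
    _ ≤ ∫ u, M' * w u ∂G := by
        apply integral_mono_of_nonneg (Filter.Eventually.of_forall fun u => abs_nonneg _)
          (hIw.const_mul M')
        apply Filter.Eventually.of_forall
        intro u
        show |w u * τ u| ≤ M' * w u
        rw [abs_mul, abs_of_nonneg (hwnn u), mul_comm]
        exact mul_le_mul_of_nonneg_right (hM'τ u) (hwnn u)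
    _ = M' := by rw [integral_const_mul, hwint, mul_one]
  -- conclude
  have hN : |T1 + T2 - D * S| ≤ M * (∫ u, |hplus u - hminus u| ∂G)
      + M' * ((∫ u, |hplus u - wbar u| ∂G) + |D|) := by
    have h1 : |T1 + T2 - D * S| ≤ |T1| + |T2| + |D * S| := by
      calc |T1 + T2 - D * S| ≤ |T1 + T2| + |D * S| := by
            simpa [sub_eq_add_neg, abs_neg] using abs_add_le (T1 + T2) (-(D * S))
      _ ≤ |T1| + |T2| + |D * S| := add_le_add (abs_add_le _ _) le_rfl
    have h2 : |D * S| ≤ M' * |D| := by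
      calc |D * S| = |D| * |S| := abs_mul _ _
      _ ≤ |D| * M' := mul_le_mul_of_nonneg_left hbS (abs_nonneg _)
      _ = M' * |D| := mul_comm _ _
    nlinarith [hbT1, hbT2]
  rw [hdecomp, abs_div, abs_of_pos hhppos]
  have hgoal : M * (∫ u, |hplus u - hminus u| ∂G) / E
      + M' * ((∫ u, |hplus u - wbar u| ∂G) + |D|) / E
      = (M * (∫ u, |hplus u - hminus u| ∂G)
      + M' * ((∫ u, |hplus u - wbar u| ∂G) + |D|)) / E := by ring
  rw [hgoal]
  gcongr
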